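/- Let m, n, l, k, A be as follows: m, n, l pairwise relatively prime positive integers with m square-free, m² = n² + nl + l², k = n + l, A = klmn. Then the 14 integers kl, kn, nl, mn, ml, mk, −kl, −kn, −nl, −mn, −ml, −mk, klmn, −klmn are pairwise inequivalent modulo squares of nonzero rationals. -/

import Mathlib

set_option maxHeartbeats 1000000

lemma coprime_of_no_prime (a b : ℤ)
    (h : ∀ p : ℕ, p.Prime → (p:ℤ) ∣ a → (p:ℤ) ∣ b → False) : IsCoprime a b := by
  rw [Int.isCoprime_iff_gcd_eq_one]
  by_contra hg
  obtain ⟨p, hp, hpd⟩ := Nat.exists_prime_and_dvd hg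
  exact h p hp (dvd_trans (Int.natCast_dvd_natCast.mpr hpd) (Int.gcd_dvd_left a b))
    (dvd_trans (Int.natCast_dvd_natCast.mpr hpd) (Int.gcd_dvd_right a b))

lemma sq_sq_of_coprime (a b c : ℤ) (hco : IsCoprime a b) (h : a * b = c^2)
    (ha : 0 < a) (hb : 0 < b) :
    ∃ s t : ℤ, 0 < s ∧ 0 < t ∧ a = s^2 ∧ b = t^2 := by
  obtain ⟨s, hs | hs⟩ := Int.sq_of_isCoprime hco h
  swap
  · exfalso; nlinarith [sq_nonneg s]
  obtain ⟨t, ht | ht⟩ := Int.sq_of_isCoprime hco.symm (show b * a = c^2 by rw [← h]; ring)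
  swap
  · exfalso; nlinarith [sq_nonneg t]
  refine ⟨|s|, |t|, ?_, ?_, ?_, ?_⟩
  · exact abs_pos.mpr (by rintro rfl; simp at hs; omega)
  · exact abs_pos.mpr (by rintro rfl; simp at ht; omega)
  · rw [sq_abs]; exact hs
  · rw [sq_abs]; exact ht

lemma pos_factor (a b : ℤ) (ha : 0 < a) (h : 0 < a * b) : 0 < b := by
  rcases lt_trichotomy b 0 with hb | rfl | hb
  · nlinarith
  · simp at h
  · exact hb

lemma odd_sq_mod8 (a : ℤ) (h : Odd a) : a^2 % 8 = 1 := by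
  obtain ⟨b, rfl⟩ := h
  obtain ⟨c, hc⟩ := Int.even_mul_succ_self b
  have : (2*b+1)^2 = 8*c + 1 := by nlinarith [hc]
  omega

lemma sq_mod8 (a : ℤ) : a^2 % 8 = 0 ∨ a^2 % 8 = 1 ∨ a^2 % 8 = 4 := by
  rcases Int.even_or_odd a with ⟨b, rfl⟩ | h
  · rcases Int.even_or_odd b with ⟨c, rfl⟩ | ⟨c, rfl⟩
    · left
      have : (c+c+(c+c))^2 = 8*(2*c^2) := by ring
      omega
    · right; right
      have : (2*c+1+(2*c+1))^2 = 8*(2*c^2+2*c) + 4 := by ring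
      omega
  · right; left; exact odd_sq_mod8 a h

lemma prime_int (p : ℕ) (hp : p.Prime) : Prime (p : ℤ) := Nat.prime_iff_prime_int.mp hp

lemma pair_red (r s : ℤ) (h : ¬ IsSquare (r * s)) :
    ¬∃ q : ℚ, (r : ℚ) = q ^ 2 * (s : ℚ) := by
  rintro ⟨q, hq⟩
  apply h
  set c : ℚ := q * s with hc
  have h2 : c * c = ((r * s : ℤ) : ℚ) := by
    push_cast
    rw [hq]; ring
  have hden : c.den = 1 := by
    have h3 : c.den * c.den = 1 := by rw [← Rat.mul_self_den, h2, Rat.den_intCast]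
    exact Nat.eq_one_of_mul_eq_one_right h3
  have hcnum : ((c.num : ℤ) : ℚ) = c := by
    rw [← Rat.num_div_den c, hden]; simp
  have : ((c.num * c.num : ℤ) : ℚ) = ((r * s : ℤ) : ℚ) := by
    push_cast
    rw [hcnum]
    exact_mod_cast h2
  exact ⟨c.num, by exact_mod_cast this.symm⟩

lemma red_sq (r s c w : ℤ) (hc : c ≠ 0) (he : r * s = c^2 * w)
    (hw : ¬ IsSquare w) : ¬ IsSquare (r * s) := by
  rintro ⟨t, ht⟩
  apply hw
  have hdvd : c ∣ t := by
    have : c^2 ∣ t^2 := ⟨w, by rw [← he, ht]; ring⟩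
    exact (Int.pow_dvd_pow_iff (two_ne_zero)).mp this
  obtain ⟨u, rfl⟩ := hdvd
  have : c^2 * w = c^2 * (u * u) := by rw [← he, ht]; ring
  have := mul_left_cancel₀ (pow_ne_zero 2 hc) this
  exact ⟨u, this⟩

lemma red_neg1 (a b : ℤ) (ha : 0 < a) (hb : 0 < b) : ¬ IsSquare (a * -b) := by
  rintro ⟨t, ht⟩
  nlinarith [mul_self_nonneg t]

lemma red_neg2 (a b : ℤ) (ha : 0 < a) (hb : 0 < b) : ¬ IsSquare (-a * b) := by
  rintro ⟨t, ht⟩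
  nlinarith [mul_self_nonneg t]

lemma not_sq_of_sqfree (m w : ℤ) (hm : 2 ≤ m) (hsf : Squarefree m)
    (hco : IsCoprime m w) : ¬ IsSquare (m * w) := by
  rintro ⟨t, ht⟩
  obtain ⟨a, ha | ha⟩ := Int.sq_of_isCoprime hco (show m*w = t^2 by rw [ht]; ring)
  · have : IsUnit a := hsf a (by rw [ha]; exact ⟨1, by ring⟩)
    rcases Int.isUnit_iff.mp this with rfl | rfl <;> omega
  · nlinarith [sq_nonneg a]

lemma Eplus_core (N : ℕ)
    (IH : ∀ M, M < N → ∀ x y z : ℤ, (x^2+y^2).toNat = M → 0 < x → 0 < y → 0 < z →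
      IsCoprime x y → x^4 + x^2*y^2 + y^4 = z^2 → False)
    (x y z : ℤ) (hmeas : (x^2+y^2).toNat = N) (hx : 0 < x) (hy : 0 < y) (hz : 0 < z)
    (hxe : Even x) (hyo : Odd y) (hco : IsCoprime x y)
    (heq : x^4 + x^2*y^2 + y^4 = z^2) : False := by
  obtain ⟨x1, hx1⟩ := hxe
  have hx1' : x = 2*x1 := by omega
  have hx1pos : 0 < x1 := by omega
  set A := 2*z - 2*x^2 - y^2 with hA
  set B := 2*z + 2*x^2 + y^2 with hB
  have hAB : A * B = 3 * y^4 := by rw [hA, hB]; linear_combination (-4 : ℤ) * heq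
  have hBpos : 0 < B := by rw [hB]; linarith [sq_nonneg x, sq_nonneg y, hz]
  have hy4pos : 0 < 3*y^4 := by linarith [pow_pos hy 4]
  have hApos : 0 < A := pos_factor B A hBpos (by rw [mul_comm, hAB]; exact hy4pos)
  have hyodd2 : Odd (y^2) := hyo.pow
  obtain ⟨yc, hyc⟩ := hyodd2
  have hAodd : Odd A := ⟨z - x^2 - yc - 1, by omega⟩
  have hBodd : Odd B := ⟨z + x^2 + yc, by omega⟩
  have hBA : B - A = 4*x^2 + 2*y^2 := by rw [hA, hB]; ring
  -- A and B are coprime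
  have hcoAB : IsCoprime A B := by
    apply coprime_of_no_prime
    intro p hp hpA hpB
    have hpZ : Prime (p:ℤ) := prime_int p hp
    have hp2 : (p:ℤ) ≠ 2 := by
      rintro h2
      rcases hAodd with ⟨c, hc⟩
      rcases hpA with ⟨d, hd⟩
      rw [h2] at hd
      omega
    have hple2 := hp.two_le
    have hpy : ¬ (p:ℤ) ∣ y := by
      intro hdvd
      have h4 : (p:ℤ) ∣ 4*x^2 + 2*y^2 := by rw [← hBA]; exact dvd_sub hpB hpA
      have hx2 : (p:ℤ) ∣ 4*x^2 := by
        have h2y : (p:ℤ) ∣ 2*y^2 := ((dvd_pow hdvd two_ne_zero).mul_left 2)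
        have he : 4*x^2 = (4*x^2 + 2*y^2) - 2*y^2 := by ring
        rw [he]; exact dvd_sub h4 h2y
      have hpx : (p:ℤ) ∣ x := by
        rcases hpZ.dvd_mul.mp hx2 with h | h
        · exfalso
          have hd2 : (p:ℤ) ∣ 2 := hpZ.dvd_of_dvd_pow (show (p:ℤ) ∣ 2^2 by norm_num; exact h)
          have := Int.le_of_dvd (by norm_num) hd2
          omega
        · exact hpZ.dvd_of_dvd_pow h
      exact absurd (hco.isUnit_of_dvd' hpx hdvd) (by rw [Int.isUnit_iff]; omega)
    have hdvd3y : (p:ℤ) ∣ 3*y^4 := hAB ▸ hpA.mul_right B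
    rcases hpZ.dvd_mul.mp hdvd3y with h3 | hy4
    · have hple3 := Int.le_of_dvd (by norm_num) h3
      have hp3 : (p:ℤ) = 3 := by omega
      apply hpy
      rw [hp3] at hpA hpB
      have h9 : (3:ℤ)*3 ∣ A*B := mul_dvd_mul hpA hpB
      rw [hAB] at h9
      obtain ⟨c, hc⟩ := h9
      have h3y4 : (3:ℤ) ∣ y^4 := ⟨c, by linarith⟩
      rw [hp3]
      exact Int.prime_three.dvd_of_dvd_pow h3y4
    · exact hpy (hpZ.dvd_of_dvd_pow hy4)
  have h3AB : (3:ℤ) ∣ A * B := ⟨y^4, hAB⟩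
  rcases Int.prime_three.dvd_mul.mp h3AB with h3A | h3B
  · -- 3 ∣ A : contradiction branch
    obtain ⟨A', hA'⟩ := h3A
    have hcoA'B : IsCoprime A' B := hcoAB.of_isCoprime_of_dvd_left ⟨3, by rw [hA']; ring⟩
    have hA'B : A' * B = y^4 := by
      have h3' : 3 * (A' * B) = 3 * y^4 := by rw [← hAB, hA']; ring
      linarith
    have hA'pos : 0 < A' := by linarith [hApos, hA']
    obtain ⟨s, t, hs, ht, hsq, htq⟩ :=
      sq_sq_of_coprime A' B (y^2) hcoA'B (by rw [hA'B]; ring) hA'pos hBpos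
    have hst : s * t = y^2 := by
      have h1 : s^2 * t^2 = y^4 := by rw [← hsq, ← htq]; exact hA'B
      have h2 : (s*t - y^2)*(s*t + y^2) = 0 := by linear_combination h1
      rcases mul_eq_zero.mp h2 with h | h
      · linarith
      · linarith [mul_pos hs ht, pow_pos hy 2]
    have hA3 : A = 3*s^2 := by rw [hA', hsq]
    have hsodd : Odd s := by
      rcases Int.even_or_odd s with ⟨c, hc⟩ | h
      · exfalso
        have he : A = 2*(6*c^2) := by rw [hA3, hc]; ring
        rcases hAodd with ⟨d, hd⟩
        omega
      · exact h
    have htodd : Odd t := by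
      rcases Int.even_or_odd t with ⟨c, hc⟩ | h
      · exfalso
        have he : B = 2*(2*c^2) := by rw [htq, hc]; ring
        rcases hBodd with ⟨d, hd⟩
        omega
      · exact h
    have hkey : (t - 3*s)*(t + s) = 4*x^2 := by
      linear_combination -htq + hA3 - 2*hst + hBA
    obtain ⟨σ, hσ⟩ := hsodd
    obtain ⟨τ, hτ⟩ := htodd
    set α := τ + σ + 1 with hαdef
    set β := τ - 3*σ - 1 with hβdef
    have h2α : 2*α = t + s := by omega
    have h2β : 2*β = t - 3*s := by omega
    have hαβ : α * β = x^2 := by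
      have h4 : 4*(α * β) = 4*x^2 := by
        calc 4*(α*β) = (2*α)*(2*β) := by ring
        _ = (t + s)*(t - 3*s) := by rw [h2α, h2β]
        _ = 4*x^2 := by rw [← hkey]; ring
      linarith
    have hαpos : 0 < α := by omega
    have hβpos : 0 < β := pos_factor α β hαpos (by rw [hαβ]; exact pow_pos hx 2)
    have hcoST : IsCoprime s t := by
      have hh := hcoA'B
      rw [hsq, htq] at hh
      exact (IsCoprime.pow_left_iff two_pos).mp ((IsCoprime.pow_right_iff two_pos).mp hh)
    have heven : Even (α*β) := by rw [hαβ, hx1']; exact ⟨2*x1^2, by ring⟩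
    have hβα : ∃ α' β' : ℤ, α = 2*α' ∧ β = 2*β' := by
      rcases Int.even_mul.mp heven with ⟨a2, ha2⟩ | ⟨b2, hb2⟩
      · exact ⟨a2, a2 - 2*σ - 1, by omega, by omega⟩
      · exact ⟨b2 + 2*σ + 1, b2, by omega, by omega⟩
    obtain ⟨α', β', hα', hβ'⟩ := hβα
    have hα'pos : 0 < α' := by omega
    have hβ'pos : 0 < β' := by omega
    have hsαβ : s = α' - β' := by omega
    have htαβ : t = 3*α' + β' := by omega
    have hcoα'β' : IsCoprime α' β' := by
      apply coprime_of_no_prime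
      intro p hp h1 h2
      have hps : (p:ℤ) ∣ s := by rw [hsαβ]; exact dvd_sub h1 h2
      have hpt : (p:ℤ) ∣ t := by rw [htαβ]; exact dvd_add (h1.mul_left 3) h2
      exact absurd (hcoST.isUnit_of_dvd' hps hpt)
        (by rw [Int.isUnit_iff]; have := hp.two_le; omega)
    have hprod : α' * β' = x1^2 := by
      have h4 : 4*(α' * β') = 4*x1^2 := by
        calc 4*(α'*β') = (2*α')*(2*β') := by ring
        _ = α*β := by rw [← hα', ← hβ']
        _ = x^2 := hαβ
        _ = 4*x1^2 := by rw [hx1']; ring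
      linarith
    obtain ⟨c, d, hcpos, hdpos, hcq, hdq⟩ :=
      sq_sq_of_coprime α' β' x1 hcoα'β' hprod hα'pos hβ'pos
    have hs_eq : s = c^2 - d^2 := by linear_combination hsαβ + hcq - hdq
    have ht_eq : t = 3*c^2 + d^2 := by linear_combination htαβ + 3*hcq + hdq
    obtain ⟨e, f, hepos, hfpos, heq2, hfq2⟩ :=
      sq_sq_of_coprime s t y hcoST hst hs ht
    have heodd : Odd e := by
      rcases Int.even_or_odd e with ⟨c2, hc2⟩ | h
      · exfalso
        have : s = 2*(2*c2^2) := by rw [heq2, hc2]; ring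
        omega
      · exact h
    have hfodd : Odd f := by
      rcases Int.even_or_odd f with ⟨c2, hc2⟩ | h
      · exfalso
        have : t = 2*(2*c2^2) := by rw [hfq2, hc2]; ring
        omega
      · exact h
    have hsum : e^2 + f^2 = 4*c^2 := by rw [← heq2, ← hfq2, hs_eq, ht_eq]; ring
    have h1 := odd_sq_mod8 e heodd
    have h2 := odd_sq_mod8 f hfodd
    have h3 := sq_mod8 c
    omega
  · -- 3 ∣ B : descent branch
    obtain ⟨B', hB'⟩ := h3B
    have hcoAB' : IsCoprime A B' := hcoAB.of_isCoprime_of_dvd_right ⟨3, by rw [hB']; ring⟩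
    have hAB' : A * B' = y^4 := by
      have h3' : 3 * (A * B') = 3 * y^4 := by rw [← hAB, hB']; ring
      linarith
    have hB'pos : 0 < B' := by linarith [hBpos, hB']
    obtain ⟨t1, s1, ht1, hs1, hAq, hB'q⟩ :=
      sq_sq_of_coprime A B' (y^2) hcoAB' (by rw [hAB']; ring) hApos hB'pos
    have hst : s1 * t1 = y^2 := by
      have h1 : t1^2 * s1^2 = y^4 := by rw [← hAq, ← hB'q]; exact hAB'
      have h2 : (s1*t1 - y^2)*(s1*t1 + y^2) = 0 := by linear_combination h1
      rcases mul_eq_zero.mp h2 with h | h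
      · linarith
      · linarith [mul_pos hs1 ht1, pow_pos hy 2]
    have hB3 : B = 3*s1^2 := by rw [hB', hB'q]
    have ht1odd : Odd t1 := by
      rcases Int.even_or_odd t1 with ⟨c, hc⟩ | h
      · exfalso
        have he : A = 2*(2*c^2) := by rw [hAq, hc]; ring
        rcases hAodd with ⟨d, hd⟩
        omega
      · exact h
    have hs1odd : Odd s1 := by
      rcases Int.even_or_odd s1 with ⟨c, hc⟩ | h
      · exfalso
        have he : B = 2*(6*c^2) := by rw [hB3, hc]; ring
        rcases hBodd with ⟨d, hd⟩
        omega
      · exact h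
    have hcoST : IsCoprime s1 t1 := by
      have hh := hcoAB'.symm
      rw [hAq, hB'q] at hh
      exact (IsCoprime.pow_left_iff two_pos).mp ((IsCoprime.pow_right_iff two_pos).mp hh)
    have hkey : (3*s1 + t1)*(s1 - t1) = 4*x^2 := by
      linear_combination -hB3 + hAq - 2*hst + hBA
    obtain ⟨σ, hσ⟩ := hs1odd
    obtain ⟨τ, hτ⟩ := ht1odd
    set α := 3*σ + τ + 2 with hαdef
    set β := σ - τ with hβdef
    have h2α : 2*α = 3*s1 + t1 := by omega
    have h2β : 2*β = s1 - t1 := by omega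
    have hαβ : α * β = x^2 := by
      have h4 : 4*(α * β) = 4*x^2 := by
        calc 4*(α*β) = (2*α)*(2*β) := by ring
        _ = (3*s1 + t1)*(s1 - t1) := by rw [h2α, h2β]
        _ = 4*x^2 := hkey
      linarith
    have hαpos : 0 < α := by omega
    have hβpos : 0 < β := pos_factor α β hαpos (by rw [hαβ]; exact pow_pos hx 2)
    have heven : Even (α*β) := by rw [hαβ, hx1']; exact ⟨2*x1^2, by ring⟩
    have hβα : ∃ α' β' : ℤ, α = 2*α' ∧ β = 2*β' := by
      rcases Int.even_mul.mp heven with ⟨a2, ha2⟩ | ⟨b2, hb2⟩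
      · refine ⟨a2, a2 - σ - τ - 1, by omega, by omega⟩
      · refine ⟨b2 + σ + τ + 1, b2, by omega, by omega⟩
    obtain ⟨α', β', hα', hβ'⟩ := hβα
    have hα'pos : 0 < α' := by omega
    have hβ'pos : 0 < β' := by omega
    have hsαβ : s1 = α' + β' := by omega
    have htαβ : t1 = α' - 3*β' := by omega
    have hcoα'β' : IsCoprime α' β' := by
      apply coprime_of_no_prime
      intro p hp h1 h2
      have hps : (p:ℤ) ∣ s1 := by rw [hsαβ]; exact dvd_add h1 h2
      have hpt : (p:ℤ) ∣ t1 := by rw [htαβ]; exact dvd_sub h1 (h2.mul_left 3)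
      exact absurd (hcoST.isUnit_of_dvd' hps hpt)
        (by rw [Int.isUnit_iff]; have := hp.two_le; omega)
    have hprod : α' * β' = x1^2 := by
      have h4 : 4*(α' * β') = 4*x1^2 := by
        calc 4*(α'*β') = (2*α')*(2*β') := by ring
        _ = α*β := by rw [← hα', ← hβ']
        _ = x^2 := hαβ
        _ = 4*x1^2 := by rw [hx1']; ring
      linarith
    obtain ⟨c, d, hcpos, hdpos, hcq, hdq⟩ :=
      sq_sq_of_coprime α' β' x1 hcoα'β' hprod hα'pos hβ'pos
    have hs_eq : s1 = c^2 + d^2 := by linear_combination hsαβ + hcq + hdq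
    have ht_eq : t1 = c^2 - 3*d^2 := by linear_combination htαβ + hcq - 3*hdq
    obtain ⟨e, f, hepos, hfpos, heq2, hfq2⟩ :=
      sq_sq_of_coprime s1 t1 y hcoST hst hs1 ht1
    have heodd : Odd e := by
      rcases Int.even_or_odd e with ⟨c2, hc2⟩ | h
      · exfalso
        have : s1 = 2*(2*c2^2) := by rw [heq2, hc2]; ring
        omega
      · exact h
    have hfodd : Odd f := by
      rcases Int.even_or_odd f with ⟨c2, hc2⟩ | h
      · exfalso
        have : t1 = 2*(2*c2^2) := by rw [hfq2, hc2]; ring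
        omega
      · exact h
    have hcoEF : IsCoprime e f := by
      have hh := hcoST
      rw [heq2, hfq2] at hh
      exact (IsCoprime.pow_left_iff two_pos).mp ((IsCoprime.pow_right_iff two_pos).mp hh)
    -- e² − f² = 4 d²
    have hef : e^2 - f^2 = 4*d^2 := by
      rw [← heq2, ← hfq2, hs_eq, ht_eq]; ring
    obtain ⟨ε, hε⟩ := heodd
    obtain ⟨φ, hφ⟩ := hfodd
    set γ := ε - φ with hγdef
    set δ := ε + φ + 1 with hδdef
    have h2γ : 2*γ = e - f := by omega
    have h2δ : 2*δ = e + f := by omega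
    have hγδ : γ * δ = d^2 := by
      have h4 : 4*(γ * δ) = 4*d^2 := by
        calc 4*(γ*δ) = (2*γ)*(2*δ) := by ring
        _ = (e - f)*(e + f) := by rw [h2γ, h2δ]
        _ = 4*d^2 := by rw [← hef]; ring
      linarith
    have hδpos : 0 < δ := by omega
    have hγpos : 0 < γ := by
      have := pos_factor δ γ hδpos (by rw [mul_comm, hγδ]; exact pow_pos hdpos 2)
      exact this
    have hcoγδ : IsCoprime γ δ := by
      apply coprime_of_no_prime
      intro p hp h1 h2
      have hpe : (p:ℤ) ∣ e := by have : e = δ + γ := by omega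
                                 rw [this]; exact dvd_add h2 h1
      have hpf : (p:ℤ) ∣ f := by have : f = δ - γ := by omega
                                 rw [this]; exact dvd_sub h2 h1
      exact absurd (hcoEF.isUnit_of_dvd' hpe hpf)
        (by rw [Int.isUnit_iff]; have := hp.two_le; omega)
    obtain ⟨g, h, hgpos, hhpos, hgq, hhq⟩ :=
      sq_sq_of_coprime γ δ d hcoγδ hγδ hγpos hδpos
    have hcoGH : IsCoprime g h := by
      have hh2 := hcoγδ
      rw [hgq, hhq] at hh2
      exact (IsCoprime.pow_left_iff two_pos).mp ((IsCoprime.pow_right_iff two_pos).mp hh2)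
    have he_gh : e = g^2 + h^2 := by omega
    have hd_gh : d^2 = g^2 * h^2 := by linear_combination -hγδ + δ*hgq + g^2*hhq
    -- final equation : g⁴ + g²h² + h⁴ = c²
    have he2 : e^2 = c^2 + d^2 := by linear_combination -heq2 + hs_eq
    have hfin : g^4 + g^2*h^2 + h^4 = c^2 := by
      linear_combination (-(e + g^2 + h^2))*he_gh + he2 + hd_gh
    -- measure decreases
    have hs1y : s1 ≤ y^2 := (le_mul_of_one_le_right hs1.le (by linarith)).trans_eq hst
    have heley : e ≤ y := by
      by_contra hgt
      push_neg at hgt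
      have h5 : y^2 < e^2 := by
        have h7 : y*y < e*e := mul_lt_mul' hgt.le hgt hy.le (by linarith)
        calc y^2 = y*y := sq y
        _ < e*e := h7
        _ = e^2 := (sq e).symm
      have h6 : e^2 = s1 := heq2.symm
      linarith
    have hlt : g^2 + h^2 < x^2 + y^2 := by
      have hy2 : y ≤ y^2 := le_self_pow₀ (by linarith) two_ne_zero
      have := pow_pos hx 2
      linarith [he_gh]
    have hm' : (g^2 + h^2).toNat < N := by
      rw [← hmeas]
      have hpos : (0:ℤ) < x^2 + y^2 := by positivity
      exact (Int.toNat_lt_toNat hpos).mpr hlt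
    exact IH _ hm' g h c rfl hgpos hhpos hcpos hcoGH hfin

lemma cop_abs (x y : ℤ) (h : IsCoprime x y) : IsCoprime |x| |y| := by
  rcases abs_cases x with ⟨h1, _⟩ | ⟨h1, _⟩ <;> rcases abs_cases y with ⟨h2, _⟩ | ⟨h2, _⟩ <;>
    rw [h1, h2] <;>
    first
      | exact h
      | exact h.neg_left
      | exact h.neg_right
      | exact h.neg_left.neg_right

lemma Eplus_ind : ∀ (N : ℕ) (x y z : ℤ), (x^2+y^2).toNat = N → 0 < x → 0 < y → 0 < z →
    IsCoprime x y → x^4 + x^2*y^2 + y^4 = z^2 → False := by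
  intro N
  induction N using Nat.strong_induction_on with
  | _ N IH =>
    intro x y z hmeas hx hy hz hco heq
    rcases Int.even_or_odd x with hxe | hxo
    · have hyo : Odd y := by
        rcases Int.even_or_odd y with hye | hyo
        · exfalso
          obtain ⟨a, ha⟩ := hxe
          obtain ⟨b, hb⟩ := hye
          have h2 : (2:ℤ) ∣ x := ⟨a, by omega⟩
          have h2' : (2:ℤ) ∣ y := ⟨b, by omega⟩
          have := hco.isUnit_of_dvd' h2 h2'
          rw [Int.isUnit_iff] at this
          omega
        · exact hyo
      exact Eplus_core N IH x y z hmeas hx hy hz hxe hyo hco heq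
    · rcases Int.even_or_odd y with hye | hyo
      · exact Eplus_core N IH y x z (by rw [add_comm (y^2) (x^2)]; exact hmeas) hy hx hz hye
          hxo hco.symm (by linear_combination heq)
      · have e1 : (x^2)^2 % 8 = 1 := odd_sq_mod8 _ (hxo.pow)
        have e2 : (y^2)^2 % 8 = 1 := odd_sq_mod8 _ (hyo.pow)
        have e3 : (x*y)^2 % 8 = 1 := odd_sq_mod8 _ (hxo.mul hyo)
        have e4 := sq_mod8 z
        have he : (x^2)^2 + (x*y)^2 + (y^2)^2 = z^2 := by linear_combination heq
        omega

lemma Eplus (x y z : ℤ) (hco : IsCoprime x y) (hx : x ≠ 0) (hy : y ≠ 0)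
    (heq : x^4 + x^2*y^2 + y^4 = z^2) : False := by
  have hz : z ≠ 0 := by
    rintro rfl
    have h1 : 0 < x^4 := by positivity
    have h2 : 0 ≤ x^2*y^2 := by positivity
    have h3 : 0 ≤ y^4 := by positivity
    linarith
  have hx4 : |x|^4 = x^4 := by rw [← abs_pow]; exact abs_of_nonneg (by positivity)
  have hy4 : |y|^4 = y^4 := by rw [← abs_pow]; exact abs_of_nonneg (by positivity)
  exact Eplus_ind ((|x|^2+|y|^2).toNat) |x| |y| |z| rfl (abs_pos.mpr hx) (abs_pos.mpr hy)
    (abs_pos.mpr hz) (cop_abs x y hco)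
    (by rw [hx4, hy4, sq_abs, sq_abs, sq_abs]; exact heq)

lemma Eminus_coreA (N : ℕ)
    (IH : ∀ M, M < N → ∀ x y z : ℤ, (x^2+y^2).toNat = M → 0 < x → 0 < y → 0 < z →
      x^2 ≠ y^2 → IsCoprime x y → x^4 - x^2*y^2 + y^4 = z^2 → False)
    (x y z : ℤ) (hmeas : (x^2+y^2).toNat = N) (hx : 0 < x) (hy : 0 < y) (hz : 0 < z)
    (hxo : Odd x) (hye : Even y) (hne : x^2 ≠ y^2) (hco : IsCoprime x y)
    (heq : x^4 - x^2*y^2 + y^4 = z^2) : False := by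
  obtain ⟨y1, hy1⟩ := hye
  have hy1' : y = 2*y1 := by omega
  have hy1pos : 0 < y1 := by omega
  set C := 2*z - 2*y^2 + x^2 with hC
  set D := 2*z + 2*y^2 - x^2 with hD
  have hCD : C * D = 3 * x^4 := by rw [hC, hD]; linear_combination (-4 : ℤ) * heq
  have hx4pos : 0 < 3*x^4 := by linarith [pow_pos hx 4]
  have h4z : 4*z^2 = (x^2-2*y^2)^2 + 3*x^4 := by linear_combination (-4:ℤ)*heq
  have hDpos : 0 < D := by
    by_contra hDn
    push_neg at hDn
    have h1 : 2*z ≤ x^2 - 2*y^2 := by rw [hD] at hDn; linarith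
    have h0 : (0:ℤ) ≤ 2*z := by linarith
    have h2 : (2*z)^2 ≤ (x^2-2*y^2)^2 := pow_le_pow_left₀ h0 h1 2
    have h2' : (2*z)^2 = 4*z^2 := by ring
    linarith
  have hCpos : 0 < C := pos_factor D C hDpos (by rw [mul_comm, hCD]; exact hx4pos)
  obtain ⟨xc, hxc⟩ : Odd (x^2) := hxo.pow
  have hCodd : Odd C := ⟨z - y^2 + xc, by omega⟩
  have hDodd : Odd D := ⟨z + y^2 - xc - 1, by omega⟩
  have hDC : D - C = 4*y^2 - 2*x^2 := by rw [hC, hD]; ring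
  have hcoCD : IsCoprime C D := by
    apply coprime_of_no_prime
    intro p hp hpC hpD
    have hpZ : Prime (p:ℤ) := prime_int p hp
    have hp2 : (p:ℤ) ≠ 2 := by
      rintro h2
      rcases hCodd with ⟨c, hc⟩
      rcases hpC with ⟨d, hd⟩
      rw [h2] at hd
      omega
    have hple2 := hp.two_le
    have hpx : ¬ (p:ℤ) ∣ x := by
      intro hdvd
      have h4 : (p:ℤ) ∣ 4*y^2 - 2*x^2 := by rw [← hDC]; exact dvd_sub hpD hpC
      have hy2 : (p:ℤ) ∣ 4*y^2 := by
        have h2x : (p:ℤ) ∣ 2*x^2 := ((dvd_pow hdvd two_ne_zero).mul_left 2)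
        have he : 4*y^2 = (4*y^2 - 2*x^2) + 2*x^2 := by ring
        rw [he]; exact dvd_add h4 h2x
      have hpy : (p:ℤ) ∣ y := by
        rcases hpZ.dvd_mul.mp hy2 with h | h
        · exfalso
          have hd2 : (p:ℤ) ∣ 2 := hpZ.dvd_of_dvd_pow (show (p:ℤ) ∣ 2^2 by norm_num; exact h)
          have := Int.le_of_dvd (by norm_num) hd2
          omega
        · exact hpZ.dvd_of_dvd_pow h
      exact absurd (hco.isUnit_of_dvd' hdvd hpy) (by rw [Int.isUnit_iff]; omega)
    have hdvd3x : (p:ℤ) ∣ 3*x^4 := hCD ▸ hpC.mul_right D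
    rcases hpZ.dvd_mul.mp hdvd3x with h3 | hx4
    · have hple3 := Int.le_of_dvd (by norm_num) h3
      have hp3 : (p:ℤ) = 3 := by omega
      apply hpx
      rw [hp3] at hpC hpD
      have h9 : (3:ℤ)*3 ∣ C*D := mul_dvd_mul hpC hpD
      rw [hCD] at h9
      obtain ⟨c, hc⟩ := h9
      have h3x4 : (3:ℤ) ∣ x^4 := ⟨c, by linarith⟩
      rw [hp3]
      exact Int.prime_three.dvd_of_dvd_pow h3x4
    · exact hpx (hpZ.dvd_of_dvd_pow hx4)
  have h3CD : (3:ℤ) ∣ C * D := ⟨x^4, hCD⟩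
  rcases Int.prime_three.dvd_mul.mp h3CD with h3C | h3D
  · -- 3 ∣ C : descent branch
    obtain ⟨C', hC'⟩ := h3C
    have hcoC'D : IsCoprime C' D := hcoCD.of_isCoprime_of_dvd_left ⟨3, by rw [hC']; ring⟩
    have hC'D : C' * D = x^4 := by
      have h3' : 3 * (C' * D) = 3 * x^4 := by rw [← hCD, hC']; ring
      linarith
    have hC'pos : 0 < C' := by linarith [hCpos, hC']
    obtain ⟨s, t, hs, ht, hsq, htq⟩ :=
      sq_sq_of_coprime C' D (x^2) hcoC'D (by rw [hC'D]; ring) hC'pos hDpos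
    have hst : s * t = x^2 := by
      have h1 : s^2 * t^2 = x^4 := by rw [← hsq, ← htq]; exact hC'D
      have h2 : (s*t - x^2)*(s*t + x^2) = 0 := by linear_combination h1
      rcases mul_eq_zero.mp h2 with h | h
      · linarith
      · linarith [mul_pos hs ht, pow_pos hx 2]
    have hC3 : C = 3*s^2 := by rw [hC', hsq]
    have hsodd : Odd s := by
      rcases Int.even_or_odd s with ⟨c, hc⟩ | h
      · exfalso
        have he : C = 2*(6*c^2) := by rw [hC3, hc]; ring
        rcases hCodd with ⟨d, hd⟩
        omega
      · exact h
    have htodd : Odd t := by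
      rcases Int.even_or_odd t with ⟨c, hc⟩ | h
      · exfalso
        have he : D = 2*(2*c^2) := by rw [htq, hc]; ring
        rcases hDodd with ⟨d, hd⟩
        omega
      · exact h
    have hcoST : IsCoprime s t := by
      have hh := hcoC'D
      rw [hsq, htq] at hh
      exact (IsCoprime.pow_left_iff two_pos).mp ((IsCoprime.pow_right_iff two_pos).mp hh)
    have hkey : (t + 3*s)*(t - s) = 4*y^2 := by
      linear_combination -htq + hC3 + 2*hst + hDC
    obtain ⟨σ, hσ⟩ := hsodd
    obtain ⟨τ, hτ⟩ := htodd
    set α := τ + 3*σ + 2 with hαdef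
    set β := τ - σ with hβdef
    have h2α : 2*α = t + 3*s := by omega
    have h2β : 2*β = t - s := by omega
    have hαβ : α * β = y^2 := by
      have h4 : 4*(α * β) = 4*y^2 := by
        calc 4*(α*β) = (2*α)*(2*β) := by ring
        _ = (t + 3*s)*(t - s) := by rw [h2α, h2β]
        _ = 4*y^2 := hkey
      linarith
    have hαpos : 0 < α := by omega
    have hβpos : 0 < β := pos_factor α β hαpos (by rw [hαβ]; exact pow_pos hy 2)
    have heven : Even (α*β) := by rw [hαβ, hy1']; exact ⟨2*y1^2, by ring⟩
    have hβα : ∃ α' β' : ℤ, α = 2*α' ∧ β = 2*β' := by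
      rcases Int.even_mul.mp heven with ⟨a2, ha2⟩ | ⟨b2, hb2⟩
      · exact ⟨a2, a2 - 2*σ - 1, by omega, by omega⟩
      · exact ⟨b2 + 2*σ + 1, b2, by omega, by omega⟩
    obtain ⟨α', β', hα', hβ'⟩ := hβα
    have hα'pos : 0 < α' := by omega
    have hβ'pos : 0 < β' := by omega
    have hsαβ : s = α' - β' := by omega
    have htαβ : t = α' + 3*β' := by omega
    have hcoα'β' : IsCoprime α' β' := by
      apply coprime_of_no_prime
      intro p hp h1 h2
      have hps : (p:ℤ) ∣ s := by rw [hsαβ]; exact dvd_sub h1 h2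
      have hpt : (p:ℤ) ∣ t := by rw [htαβ]; exact dvd_add h1 (h2.mul_left 3)
      exact absurd (hcoST.isUnit_of_dvd' hps hpt)
        (by rw [Int.isUnit_iff]; have := hp.two_le; omega)
    have hprod : α' * β' = y1^2 := by
      have h4 : 4*(α' * β') = 4*y1^2 := by
        calc 4*(α'*β') = (2*α')*(2*β') := by ring
        _ = α*β := by rw [← hα', ← hβ']
        _ = y^2 := hαβ
        _ = 4*y1^2 := by rw [hy1']; ring
      linarith
    obtain ⟨c, d, hcpos, hdpos, hcq, hdq⟩ :=
      sq_sq_of_coprime α' β' y1 hcoα'β' hprod hα'pos hβ'pos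
    have hs_eq : s = c^2 - d^2 := by linear_combination hsαβ + hcq - hdq
    have ht_eq : t = c^2 + 3*d^2 := by linear_combination htαβ + hcq + 3*hdq
    obtain ⟨e, f, hepos, hfpos, heq2, hfq2⟩ :=
      sq_sq_of_coprime s t x hcoST hst hs ht
    have hcoCD2 : IsCoprime c d := by
      have hh := hcoα'β'
      rw [hcq, hdq] at hh
      exact (IsCoprime.pow_left_iff two_pos).mp ((IsCoprime.pow_right_iff two_pos).mp hh)
    -- (c-d)(c+d) = e², both odd, coprime
    have hfact : (c - d)*(c + d) = e^2 := by linear_combination -hs_eq + heq2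
    have hcdodd : Odd (c - d) := by
      rcases Int.even_or_odd (c - d) with ⟨w, hw⟩ | h
      · exfalso
        have hw2 : c - d = 2*w := by omega
        have hse : s = 2*(w*(c+d)) := by linear_combination hs_eq + (c+d)*hw2
        omega
      · exact h
    have hcdpos : 0 < c + d := by linarith
    have hcdpos2 : 0 < c - d := pos_factor (c+d) (c-d) hcdpos
      (by rw [mul_comm, hfact]; exact pow_pos hepos 2)
    have hcocd : IsCoprime (c - d) (c + d) := by
      apply coprime_of_no_prime
      intro p hp h1 h2
      have hpZ : Prime (p:ℤ) := prime_int p hp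
      have hp2 : (p:ℤ) ≠ 2 := by
        rintro hp2'
        rcases hcdodd with ⟨w, hw⟩
        rcases h1 with ⟨w2, hw2⟩
        rw [hp2'] at hw2
        omega
      have hpc : (p:ℤ) ∣ c := by
        have h2c : (p:ℤ) ∣ 2*c := by
          have : 2*c = (c - d) + (c + d) := by ring
          rw [this]; exact dvd_add h1 h2
        rcases hpZ.dvd_mul.mp h2c with h | h
        · exfalso; have := Int.le_of_dvd (by norm_num) h; have := hp.two_le; omega
        · exact h
      have hpd : (p:ℤ) ∣ d := by
        have h2d : (p:ℤ) ∣ 2*d := by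
          have : 2*d = (c + d) - (c - d) := by ring
          rw [this]; exact dvd_sub h2 h1
        rcases hpZ.dvd_mul.mp h2d with h | h
        · exfalso; have := Int.le_of_dvd (by norm_num) h; have := hp.two_le; omega
        · exact h
      exact absurd (hcoCD2.isUnit_of_dvd' hpc hpd)
        (by rw [Int.isUnit_iff]; have := hp.two_le; omega)
    obtain ⟨g, h, hgpos, hhpos, hgq, hhq⟩ :=
      sq_sq_of_coprime (c - d) (c + d) e hcocd hfact hcdpos2 hcdpos
    have hcoGH : IsCoprime g h := by
      have hh2 := hcocd
      rw [hgq, hhq] at hh2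
      exact (IsCoprime.pow_left_iff two_pos).mp ((IsCoprime.pow_right_iff two_pos).mp hh2)
    have h2c : 2*c = g^2 + h^2 := by linear_combination hgq + hhq
    have h2d : 2*d = h^2 - g^2 := by linear_combination hhq - hgq
    have hf2 : f^2 = c^2 + 3*d^2 := by linear_combination -hfq2 + ht_eq
    have e1 : 4*c^2 = (g^2+h^2)^2 := by linear_combination (2*c + g^2 + h^2)*h2c
    have e2 : 4*d^2 = (h^2-g^2)^2 := by linear_combination (2*d + h^2 - g^2)*h2d
    have hfin : g^4 - g^2*h^2 + h^4 = f^2 := by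
      have h4 : 4*(g^4 - g^2*h^2 + h^4) = 4*f^2 := by
        linear_combination -e1 - 3*e2 - 4*hf2
      linarith
    have hne' : g^2 ≠ h^2 := by
      intro hgh
      have : 2*d = 0 := by rw [h2d, hgh]; ring
      omega
    -- measure
    have hcy1 : c ≤ y1 := by
      have h1 : α' ≤ y1^2 := (le_mul_of_one_le_right hα'pos.le (by linarith)).trans_eq hprod
      by_contra hgt
      push_neg at hgt
      have h7 : y1*y1 < c*c := mul_lt_mul' hgt.le hgt hy1pos.le (by linarith)
      have h5 : y1^2 < c^2 := by
        calc y1^2 = y1*y1 := sq y1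
        _ < c*c := h7
        _ = c^2 := (sq c).symm
      have h6 : c^2 = α' := hcq.symm
      linarith
    have hlt : g^2 + h^2 < x^2 + y^2 := by
      have hy2 : y ≤ y^2 := le_self_pow₀ (by linarith) two_ne_zero
      have := pow_pos hx 2
      linarith [h2c]
    have hm' : (g^2 + h^2).toNat < N := by
      rw [← hmeas]
      exact (Int.toNat_lt_toNat (by positivity)).mpr hlt
    exact IH _ hm' g h f rfl hgpos hhpos hfpos hne' hcoGH hfin
  · -- 3 ∣ D : contradiction branch
    obtain ⟨D', hD'⟩ := h3D
    have hcoCD' : IsCoprime C D' := hcoCD.of_isCoprime_of_dvd_right ⟨3, by rw [hD']; ring⟩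
    have hCD' : C * D' = x^4 := by
      have h3' : 3 * (C * D') = 3 * x^4 := by rw [← hCD, hD']; ring
      linarith
    have hD'pos : 0 < D' := by linarith [hDpos, hD']
    obtain ⟨t, s, ht, hs, hCq, hD'q⟩ :=
      sq_sq_of_coprime C D' (x^2) hcoCD' (by rw [hCD']; ring) hCpos hD'pos
    have hst : s * t = x^2 := by
      have h1 : t^2 * s^2 = x^4 := by rw [← hCq, ← hD'q]; exact hCD'
      have h2 : (s*t - x^2)*(s*t + x^2) = 0 := by linear_combination h1
      rcases mul_eq_zero.mp h2 with h | h
      · linarith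
      · linarith [mul_pos hs ht, pow_pos hx 2]
    have hD3 : D = 3*s^2 := by rw [hD', hD'q]
    have htodd : Odd t := by
      rcases Int.even_or_odd t with ⟨c, hc⟩ | h
      · exfalso
        have he : C = 2*(2*c^2) := by rw [hCq, hc]; ring
        rcases hCodd with ⟨d, hd⟩
        omega
      · exact h
    have hsodd : Odd s := by
      rcases Int.even_or_odd s with ⟨c, hc⟩ | h
      · exfalso
        have he : D = 2*(6*c^2) := by rw [hD3, hc]; ring
        rcases hDodd with ⟨d, hd⟩
        omega
      · exact h
    have hcoST : IsCoprime s t := by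
      have hh := hcoCD'.symm
      rw [hCq, hD'q] at hh
      exact (IsCoprime.pow_left_iff two_pos).mp ((IsCoprime.pow_right_iff two_pos).mp hh)
    have hkey : (3*s - t)*(s + t) = 4*y^2 := by
      linear_combination -hD3 + hCq + 2*hst + hDC
    obtain ⟨σ, hσ⟩ := hsodd
    obtain ⟨τ, hτ⟩ := htodd
    set α := 3*σ - τ + 1 with hαdef
    set β := σ + τ + 1 with hβdef
    have h2α : 2*α = 3*s - t := by omega
    have h2β : 2*β = s + t := by omega
    have hαβ : α * β = y^2 := by
      have h4 : 4*(α * β) = 4*y^2 := by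
        calc 4*(α*β) = (2*α)*(2*β) := by ring
        _ = (3*s - t)*(s + t) := by rw [h2α, h2β]
        _ = 4*y^2 := hkey
      linarith
    have hβpos : 0 < β := by omega
    have hαpos : 0 < α := pos_factor β α hβpos (by rw [mul_comm, hαβ]; exact pow_pos hy 2)
    have heven : Even (α*β) := by rw [hαβ, hy1']; exact ⟨2*y1^2, by ring⟩
    have hβα : ∃ α' β' : ℤ, α = 2*α' ∧ β = 2*β' := by
      rcases Int.even_mul.mp heven with ⟨a2, ha2⟩ | ⟨b2, hb2⟩
      · exact ⟨a2, 2*σ + 1 - a2, by omega, by omega⟩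
      · exact ⟨2*σ + 1 - b2, b2, by omega, by omega⟩
    obtain ⟨α', β', hα', hβ'⟩ := hβα
    have hα'pos : 0 < α' := by omega
    have hβ'pos : 0 < β' := by omega
    have hsαβ : s = α' + β' := by omega
    have htαβ : t = 3*β' - α' := by omega
    have hcoα'β' : IsCoprime α' β' := by
      apply coprime_of_no_prime
      intro p hp h1 h2
      have hps : (p:ℤ) ∣ s := by rw [hsαβ]; exact dvd_add h1 h2
      have hpt : (p:ℤ) ∣ t := by rw [htαβ]; exact dvd_sub (h2.mul_left 3) h1
      exact absurd (hcoST.isUnit_of_dvd' hps hpt)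
        (by rw [Int.isUnit_iff]; have := hp.two_le; omega)
    have hprod : α' * β' = y1^2 := by
      have h4 : 4*(α' * β') = 4*y1^2 := by
        calc 4*(α'*β') = (2*α')*(2*β') := by ring
        _ = α*β := by rw [← hα', ← hβ']
        _ = y^2 := hαβ
        _ = 4*y1^2 := by rw [hy1']; ring
      linarith
    obtain ⟨c, d, hcpos, hdpos, hcq, hdq⟩ :=
      sq_sq_of_coprime α' β' y1 hcoα'β' hprod hα'pos hβ'pos
    have hs_eq : s = c^2 + d^2 := by linear_combination hsαβ + hcq + hdq
    have ht_eq : t = 3*d^2 - c^2 := by linear_combination htαβ - hcq + 3*hdq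
    obtain ⟨e, f, hepos, hfpos, heq2, hfq2⟩ :=
      sq_sq_of_coprime s t x hcoST hst hs ht
    have heodd : Odd e := by
      rcases Int.even_or_odd e with ⟨c2, hc2⟩ | h
      · exfalso
        have : s = 2*(2*c2^2) := by rw [heq2, hc2]; ring
        omega
      · exact h
    have hfodd : Odd f := by
      rcases Int.even_or_odd f with ⟨c2, hc2⟩ | h
      · exfalso
        have : t = 2*(2*c2^2) := by rw [hfq2, hc2]; ring
        omega
      · exact h
    have hsum : e^2 + f^2 = 4*d^2 := by
      have h1 : e^2 + f^2 = s + t := by rw [← heq2, ← hfq2]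
      rw [h1, hs_eq, ht_eq]; ring
    have h1 := odd_sq_mod8 e heodd
    have h2 := odd_sq_mod8 f hfodd
    have h3 := sq_mod8 d
    omega

lemma Eminus_coreB (N : ℕ)
    (IH : ∀ M, M < N → ∀ x y z : ℤ, (x^2+y^2).toNat = M → 0 < x → 0 < y → 0 < z →
      x^2 ≠ y^2 → IsCoprime x y → x^4 - x^2*y^2 + y^4 = z^2 → False)
    (x y z : ℤ) (hmeas : (x^2+y^2).toNat = N) (hx : 0 < x) (hy : 0 < y) (hz : 0 < z)
    (hxo : Odd x) (hyo : Odd y) (hne : x^2 ≠ y^2) (hco : IsCoprime x y)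
    (heq : x^4 - x^2*y^2 + y^4 = z^2) : False := by
  have hPT : PythagoreanTriple (x*y) (x^2 - y^2) z := by
    show (x*y)*(x*y) + (x^2-y^2)*(x^2-y^2) = z*z
    linear_combination heq
  have hcoLegs : IsCoprime (x*y) (x^2 - y^2) := by
    apply coprime_of_no_prime
    intro p hp h1 h2
    have hpZ : Prime (p:ℤ) := prime_int p hp
    have hp2 := hp.two_le
    rcases hpZ.dvd_mul.mp h1 with h | h
    · have hpy : (p:ℤ) ∣ y := by
        have : (p:ℤ) ∣ y^2 := by
          have he : y^2 = x*x - (x^2 - y^2) := by ring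
          rw [he]; exact dvd_sub (h.mul_right x) h2
        exact hpZ.dvd_of_dvd_pow this
      exact absurd (hco.isUnit_of_dvd' h hpy) (by rw [Int.isUnit_iff]; omega)
    · have hpx : (p:ℤ) ∣ x := by
        have : (p:ℤ) ∣ x^2 := by
          have he : x^2 = y*y + (x^2 - y^2) := by ring
          rw [he]; exact dvd_add (h.mul_right y) h2
        exact hpZ.dvd_of_dvd_pow this
      exact absurd (hco.isUnit_of_dvd' hpx h) (by rw [Int.isUnit_iff]; omega)
  have hgcd : Int.gcd (x*y) (x^2 - y^2) = 1 := Int.isCoprime_iff_gcd_eq_one.mp hcoLegs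
  have hparity : (x*y) % 2 = 1 := Int.odd_iff.mp (hxo.mul hyo)
  obtain ⟨mm, nn, h1, h2, h3, h4, -, -⟩ :=
    PythagoreanTriple.coprime_classification' hPT hgcd hparity hz
  obtain ⟨a, ha⟩ : Odd (x^2) := hxo.pow
  obtain ⟨b, hb⟩ : Odd (y^2) := hyo.pow
  have hw : x^2 + y^2 = 2*(a + b + 1) := by omega
  set w := a + b + 1 with hwdef
  have hwpos : 0 < w := by nlinarith [pow_pos hx 2, pow_pos hy 2]
  have hweq : 4*w^2 = 4*mm^4 - 4*mm^2*nn^2 + 4*nn^4 := by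
    linear_combination (-(x^2+y^2+2*w))*hw + (x^2-y^2+2*mm*nn)*h2 + (4*(x*y)+4*(mm^2-nn^2))*h1
  have hweq' : mm^4 - mm^2*nn^2 + nn^4 = w^2 := by linarith
  have hmmnn : mm*nn ≠ 0 := by
    intro h0
    have : x^2 - y^2 = 0 := by rw [h2]; linear_combination 2*h0
    have : x^2 = y^2 := by linarith
    exact hne this
  have hmm0 : mm ≠ 0 := fun h0 => hmmnn (by rw [h0]; ring)
  have hnn0 : nn ≠ 0 := fun h0 => hmmnn (by rw [h0]; ring)
  have hne2 : mm^2 ≠ nn^2 := by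
    intro h0
    have hxy0 : x*y = 0 := by rw [h1, h0]; ring
    have := mul_pos hx hy
    omega
  have hcoMN : IsCoprime mm nn := Int.isCoprime_iff_gcd_eq_one.mpr h4
  -- measure : mm² + nn² = z < x² + y²
  have hzlt : z < x^2 + y^2 := by
    have hz2 : z^2 = (x^2+y^2)^2 - 3*(x*y)^2 := by linear_combination -heq
    have hxy2 : 0 < (x*y)^2 := pow_pos (mul_pos hx hy) 2
    have h5 : z^2 < (x^2+y^2)^2 := by linarith
    exact lt_of_pow_lt_pow_left₀ 2 (by positivity) h5
  have habs4m : |mm|^4 = mm^4 := by rw [← abs_pow]; exact abs_of_nonneg (by positivity)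
  have habs4n : |nn|^4 = nn^4 := by rw [← abs_pow]; exact abs_of_nonneg (by positivity)
  have hfin : |mm|^4 - |mm|^2*|nn|^2 + |nn|^4 = w^2 := by
    rw [habs4m, habs4n, sq_abs, sq_abs]; exact hweq'
  have hm' : (|mm|^2 + |nn|^2).toNat < N := by
    rw [← hmeas]
    apply (Int.toNat_lt_toNat (by positivity)).mpr
    rw [sq_abs, sq_abs, ← h3]
    exact hzlt
  exact IH _ hm' |mm| |nn| w rfl (abs_pos.mpr hmm0) (abs_pos.mpr hnn0) hwpos
    (by rw [sq_abs, sq_abs]; exact hne2) (cop_abs mm nn hcoMN) hfin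

lemma Eminus_ind : ∀ (N : ℕ) (x y z : ℤ), (x^2+y^2).toNat = N → 0 < x → 0 < y → 0 < z →
    x^2 ≠ y^2 → IsCoprime x y → x^4 - x^2*y^2 + y^4 = z^2 → False := by
  intro N
  induction N using Nat.strong_induction_on with
  | _ N IH =>
    intro x y z hmeas hx hy hz hne hco heq
    rcases Int.even_or_odd x with hxe | hxo
    · rcases Int.even_or_odd y with hye | hyo
      · obtain ⟨a, ha⟩ := hxe
        obtain ⟨b, hb⟩ := hye
        have h2 : (2:ℤ) ∣ x := ⟨a, by omega⟩
        have h2' : (2:ℤ) ∣ y := ⟨b, by omega⟩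
        have := hco.isUnit_of_dvd' h2 h2'
        rw [Int.isUnit_iff] at this
        omega
      · exact Eminus_coreA N IH y x z (by rw [add_comm (y^2) (x^2)]; exact hmeas) hy hx hz hyo
          hxe (fun hh => hne hh.symm) hco.symm (by linear_combination heq)
    · rcases Int.even_or_odd y with hye | hyo
      · exact Eminus_coreA N IH x y z hmeas hx hy hz hxo hye hne hco heq
      · exact Eminus_coreB N IH x y z hmeas hx hy hz hxo hyo hne hco heq

lemma Eminus (x y z : ℤ) (hco : IsCoprime x y) (hx : x ≠ 0) (hy : y ≠ 0)
    (hne : x^2 ≠ y^2) (heq : x^4 - x^2*y^2 + y^4 = z^2) : False := by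
  have hz : z ≠ 0 := by
    rintro rfl
    have h0 : (x^2 - y^2)^2 + (x*y)^2 = 0 := by linear_combination heq
    have h1 : 0 ≤ (x^2-y^2)^2 := sq_nonneg _
    have h2 : (x*y)^2 ≠ 0 := pow_ne_zero 2 (mul_ne_zero hx hy)
    have h3 : 0 ≤ (x*y)^2 := sq_nonneg _
    omega
  have hx4 : |x|^4 = x^4 := by rw [← abs_pow]; exact abs_of_nonneg (by positivity)
  have hy4 : |y|^4 = y^4 := by rw [← abs_pow]; exact abs_of_nonneg (by positivity)
  exact Eminus_ind ((|x|^2+|y|^2).toNat) |x| |y| |z| rfl (abs_pos.mpr hx) (abs_pos.mpr hy)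
    (abs_pos.mpr hz) (by rw [sq_abs, sq_abs]; exact hne) (cop_abs x y hco)
    (by rw [hx4, hy4, sq_abs, sq_abs, sq_abs]; exact heq)

/-- the 14 integers kl, kn, nl, mn, ml, mk, and their negatives,
together with ±klmn, are pairwise inequivalent modulo squares of rationals. -/
theorem fourteen_classes (m n l k A : ℤ) (hm : 0 < m) (hn : 0 < n) (hl : 0 < l)
    (hnl' : n ≠ l) (hk : k = n + l) (hA : A = k * l * m * n)
    (heq : m ^ 2 = n ^ 2 + n * l + l ^ 2) (hmsf : Squarefree m)
    (hmn : IsCoprime m n) (hml : IsCoprime m l) (hnl : IsCoprime n l) :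
    List.Pairwise (fun r s : ℤ => ¬∃ q : ℚ, (r : ℚ) = q ^ 2 * (s : ℚ))
      [k * l, k * n, n * l, m * n, m * l, m * k,
        -(k * l), -(k * n), -(n * l), -(m * n), -(m * l), -(m * k),
        k * l * m * n, -(k * l * m * n)] := by
  have hkpos : 0 < k := by rw [hk]; linarith
  have hkne : k ≠ 0 := hkpos.ne'
  have hlne : l ≠ 0 := hl.ne'
  have hnne : n ≠ 0 := hn.ne'
  have hmne : m ≠ 0 := hm.ne'
  have hm2 : 2 ≤ m := by
    by_contra hc
    push_neg at hc
    have hm1 : m = 1 := by omega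
    rw [hm1] at heq
    nlinarith [mul_pos hn hl, pow_pos hn 2, pow_pos hl 2]
  have hkn : IsCoprime k n := by
    rw [hk, show n + l = l + n*1 by ring]
    exact hnl.symm.add_mul_left_left 1
  have hkl : IsCoprime k l := by
    rw [hk, show n + l = n + l*1 by ring]
    exact hnl.add_mul_left_left 1
  have hqk : m^2 = k^2 - k*l + l^2 := by rw [hk]; linear_combination heq
  have hqn : m^2 = k^2 - k*n + n^2 := by rw [hk]; linear_combination heq
  have hmk : IsCoprime m k := by
    have h1 : IsCoprime m (l^2) := hml.pow_right
    have h2 : IsCoprime m (k*(l - k)) := by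
      have he : k*(l - k) = l^2 + m*(-m) := by linear_combination hqk
      rw [he]
      exact h1.add_mul_left_right (-m)
    exact h2.of_mul_right_left
  have H1 : ¬ IsSquare (k*l) := by
    rintro ⟨t, ht⟩
    obtain ⟨a, b, hap, hbp, haq, hbq⟩ :=
      sq_sq_of_coprime k l t hkl (by rw [ht]; ring) hkpos hl
    have hane : a^2 ≠ b^2 := by
      have hkl' : k ≠ l := by omega
      rw [haq, hbq] at hkl'
      exact hkl'
    have hcoab : IsCoprime a b := by
      have hh := hkl
      rw [haq, hbq] at hh
      exact (IsCoprime.pow_left_iff two_pos).mp ((IsCoprime.pow_right_iff two_pos).mp hh)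
    exact Eminus a b m hcoab hap.ne' hbp.ne' hane
      (by linear_combination -hqk + (l - k - a^2)*haq + (a^2 - l - b^2)*hbq)
  have H2 : ¬ IsSquare (k*n) := by
    rintro ⟨t, ht⟩
    obtain ⟨a, b, hap, hbp, haq, hbq⟩ :=
      sq_sq_of_coprime k n t hkn (by rw [ht]; ring) hkpos hn
    have hane : a^2 ≠ b^2 := by
      have hkn' : k ≠ n := by omega
      rw [haq, hbq] at hkn'
      exact hkn'
    have hcoab : IsCoprime a b := by
      have hh := hkn
      rw [haq, hbq] at hh
      exact (IsCoprime.pow_left_iff two_pos).mp ((IsCoprime.pow_right_iff two_pos).mp hh)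
    exact Eminus a b m hcoab hap.ne' hbp.ne' hane
      (by linear_combination -hqn + (n - k - a^2)*haq + (a^2 - n - b^2)*hbq)
  have H3 : ¬ IsSquare (n*l) := by
    rintro ⟨t, ht⟩
    obtain ⟨a, b, hap, hbp, haq, hbq⟩ :=
      sq_sq_of_coprime n l t hnl (by rw [ht]; ring) hn hl
    have hcoab : IsCoprime a b := by
      have hh := hnl
      rw [haq, hbq] at hh
      exact (IsCoprime.pow_left_iff two_pos).mp ((IsCoprime.pow_right_iff two_pos).mp hh)
    exact Eplus a b m hcoab hap.ne' hbp.ne'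
      (by linear_combination -heq + (-(n + a^2) - l)*haq + (-a^2 - l - b^2)*hbq)
  have H4 : ¬ IsSquare (m*n) := not_sq_of_sqfree m n hm2 hmsf hmn
  have H5 : ¬ IsSquare (m*l) := not_sq_of_sqfree m l hm2 hmsf hml
  have H6 : ¬ IsSquare (m*k) := not_sq_of_sqfree m k hm2 hmsf hmk
  have H7 : ¬ IsSquare (k*l*m*n) := by
    rw [show k*l*m*n = m*(k*l*n) by ring]
    exact not_sq_of_sqfree m (k*l*n) hm2 hmsf ((hmk.mul_right hml).mul_right hmn)
  have P1 : 0 < k*l := mul_pos hkpos hl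
  have P2 : 0 < k*n := mul_pos hkpos hn
  have P3 : 0 < n*l := mul_pos hn hl
  have P4 : 0 < m*n := mul_pos hm hn
  have P5 : 0 < m*l := mul_pos hm hl
  have P6 : 0 < m*k := mul_pos hm hkpos
  have P7 : 0 < k*l*m*n := mul_pos (mul_pos (mul_pos hkpos hl) hm) hn
  refine List.Pairwise.cons ?_ (List.Pairwise.cons ?_ (List.Pairwise.cons ?_ (List.Pairwise.cons ?_ (List.Pairwise.cons ?_ (List.Pairwise.cons ?_ (List.Pairwise.cons ?_ (List.Pairwise.cons ?_ (List.Pairwise.cons ?_ (List.Pairwise.cons ?_ (List.Pairwise.cons ?_ (List.Pairwise.cons ?_ (List.Pairwise.cons ?_ (List.Pairwise.cons ?_ List.Pairwise.nil)))))))))))))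
  · intro u hu
    simp only [List.mem_cons, List.not_mem_nil, or_false] at hu
    rcases hu with rfl | rfl | rfl | rfl | rfl | rfl | rfl | rfl | rfl | rfl | rfl | rfl | rfl
    exacts [pair_red _ _ (red_sq _ _ (k) (n * l) hkne (by ring) H3),
      pair_red _ _ (red_sq _ _ (l) (k * n) hlne (by ring) H2),
      pair_red _ _ (red_sq _ _ (1) (k * l * m * n) one_ne_zero (by ring) H7),
      pair_red _ _ (red_sq _ _ (l) (m * k) hlne (by ring) H6),
      pair_red _ _ (red_sq _ _ (k) (m * l) hkne (by ring) H5),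
      pair_red _ _ (red_neg1 (k * l) (k * l) P1 P1),
      pair_red _ _ (red_neg1 (k * l) (k * n) P1 P2),
      pair_red _ _ (red_neg1 (k * l) (n * l) P1 P3),
      pair_red _ _ (red_neg1 (k * l) (m * n) P1 P4),
      pair_red _ _ (red_neg1 (k * l) (m * l) P1 P5),
      pair_red _ _ (red_neg1 (k * l) (m * k) P1 P6),
      pair_red _ _ (red_sq _ _ (k * l) (m * n) P1.ne' (by ring) H4),
      pair_red _ _ (red_neg1 (k * l) (k * l * m * n) P1 P7)]
  · intro u hu
    simp only [List.mem_cons, List.not_mem_nil, or_false] at hu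
    rcases hu with rfl | rfl | rfl | rfl | rfl | rfl | rfl | rfl | rfl | rfl | rfl | rfl
    exacts [pair_red _ _ (red_sq _ _ (n) (k * l) hnne (by ring) H1),
      pair_red _ _ (red_sq _ _ (n) (m * k) hnne (by ring) H6),
      pair_red _ _ (red_sq _ _ (1) (k * l * m * n) one_ne_zero (by ring) H7),
      pair_red _ _ (red_sq _ _ (k) (m * n) hkne (by ring) H4),
      pair_red _ _ (red_neg1 (k * n) (k * l) P2 P1),
      pair_red _ _ (red_neg1 (k * n) (k * n) P2 P2),
      pair_red _ _ (red_neg1 (k * n) (n * l) P2 P3),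
      pair_red _ _ (red_neg1 (k * n) (m * n) P2 P4),
      pair_red _ _ (red_neg1 (k * n) (m * l) P2 P5),
      pair_red _ _ (red_neg1 (k * n) (m * k) P2 P6),
      pair_red _ _ (red_sq _ _ (k * n) (m * l) P2.ne' (by ring) H5),
      pair_red _ _ (red_neg1 (k * n) (k * l * m * n) P2 P7)]
  · intro u hu
    simp only [List.mem_cons, List.not_mem_nil, or_false] at hu
    rcases hu with rfl | rfl | rfl | rfl | rfl | rfl | rfl | rfl | rfl | rfl | rfl
    exacts [pair_red _ _ (red_sq _ _ (n) (m * l) hnne (by ring) H5),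
      pair_red _ _ (red_sq _ _ (l) (m * n) hlne (by ring) H4),
      pair_red _ _ (red_sq _ _ (1) (k * l * m * n) one_ne_zero (by ring) H7),
      pair_red _ _ (red_neg1 (n * l) (k * l) P3 P1),
      pair_red _ _ (red_neg1 (n * l) (k * n) P3 P2),
      pair_red _ _ (red_neg1 (n * l) (n * l) P3 P3),
      pair_red _ _ (red_neg1 (n * l) (m * n) P3 P4),
      pair_red _ _ (red_neg1 (n * l) (m * l) P3 P5),
      pair_red _ _ (red_neg1 (n * l) (m * k) P3 P6),
      pair_red _ _ (red_sq _ _ (n * l) (m * k) P3.ne' (by ring) H6),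
      pair_red _ _ (red_neg1 (n * l) (k * l * m * n) P3 P7)]
  · intro u hu
    simp only [List.mem_cons, List.not_mem_nil, or_false] at hu
    rcases hu with rfl | rfl | rfl | rfl | rfl | rfl | rfl | rfl | rfl | rfl
    exacts [pair_red _ _ (red_sq _ _ (m) (n * l) hmne (by ring) H3),
      pair_red _ _ (red_sq _ _ (m) (k * n) hmne (by ring) H2),
      pair_red _ _ (red_neg1 (m * n) (k * l) P4 P1),
      pair_red _ _ (red_neg1 (m * n) (k * n) P4 P2),
      pair_red _ _ (red_neg1 (m * n) (n * l) P4 P3),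
      pair_red _ _ (red_neg1 (m * n) (m * n) P4 P4),
      pair_red _ _ (red_neg1 (m * n) (m * l) P4 P5),
      pair_red _ _ (red_neg1 (m * n) (m * k) P4 P6),
      pair_red _ _ (red_sq _ _ (m * n) (k * l) P4.ne' (by ring) H1),
      pair_red _ _ (red_neg1 (m * n) (k * l * m * n) P4 P7)]
  · intro u hu
    simp only [List.mem_cons, List.not_mem_nil, or_false] at hu
    rcases hu with rfl | rfl | rfl | rfl | rfl | rfl | rfl | rfl | rfl
    exacts [pair_red _ _ (red_sq _ _ (m) (k * l) hmne (by ring) H1),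
      pair_red _ _ (red_neg1 (m * l) (k * l) P5 P1),
      pair_red _ _ (red_neg1 (m * l) (k * n) P5 P2),
      pair_red _ _ (red_neg1 (m * l) (n * l) P5 P3),
      pair_red _ _ (red_neg1 (m * l) (m * n) P5 P4),
      pair_red _ _ (red_neg1 (m * l) (m * l) P5 P5),
      pair_red _ _ (red_neg1 (m * l) (m * k) P5 P6),
      pair_red _ _ (red_sq _ _ (m * l) (k * n) P5.ne' (by ring) H2),
      pair_red _ _ (red_neg1 (m * l) (k * l * m * n) P5 P7)]
  · intro u hu
    simp only [List.mem_cons, List.not_mem_nil, or_false] at hu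
    rcases hu with rfl | rfl | rfl | rfl | rfl | rfl | rfl | rfl
    exacts [pair_red _ _ (red_neg1 (m * k) (k * l) P6 P1),
      pair_red _ _ (red_neg1 (m * k) (k * n) P6 P2),
      pair_red _ _ (red_neg1 (m * k) (n * l) P6 P3),
      pair_red _ _ (red_neg1 (m * k) (m * n) P6 P4),
      pair_red _ _ (red_neg1 (m * k) (m * l) P6 P5),
      pair_red _ _ (red_neg1 (m * k) (m * k) P6 P6),
      pair_red _ _ (red_sq _ _ (m * k) (n * l) P6.ne' (by ring) H3),
      pair_red _ _ (red_neg1 (m * k) (k * l * m * n) P6 P7)]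
  · intro u hu
    simp only [List.mem_cons, List.not_mem_nil, or_false] at hu
    rcases hu with rfl | rfl | rfl | rfl | rfl | rfl | rfl
    exacts [pair_red _ _ (red_sq _ _ (k) (n * l) hkne (by ring) H3),
      pair_red _ _ (red_sq _ _ (l) (k * n) hlne (by ring) H2),
      pair_red _ _ (red_sq _ _ (1) (k * l * m * n) one_ne_zero (by ring) H7),
      pair_red _ _ (red_sq _ _ (l) (m * k) hlne (by ring) H6),
      pair_red _ _ (red_sq _ _ (k) (m * l) hkne (by ring) H5),
      pair_red _ _ (red_neg2 (k * l) (k * l * m * n) P1 P7),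
      pair_red _ _ (red_sq _ _ (k * l) (m * n) P1.ne' (by ring) H4)]
  · intro u hu
    simp only [List.mem_cons, List.not_mem_nil, or_false] at hu
    rcases hu with rfl | rfl | rfl | rfl | rfl | rfl
    exacts [pair_red _ _ (red_sq _ _ (n) (k * l) hnne (by ring) H1),
      pair_red _ _ (red_sq _ _ (n) (m * k) hnne (by ring) H6),
      pair_red _ _ (red_sq _ _ (1) (k * l * m * n) one_ne_zero (by ring) H7),
      pair_red _ _ (red_sq _ _ (k) (m * n) hkne (by ring) H4),
      pair_red _ _ (red_neg2 (k * n) (k * l * m * n) P2 P7),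
      pair_red _ _ (red_sq _ _ (k * n) (m * l) P2.ne' (by ring) H5)]
  · intro u hu
    simp only [List.mem_cons, List.not_mem_nil, or_false] at hu
    rcases hu with rfl | rfl | rfl | rfl | rfl
    exacts [pair_red _ _ (red_sq _ _ (n) (m * l) hnne (by ring) H5),
      pair_red _ _ (red_sq _ _ (l) (m * n) hlne (by ring) H4),
      pair_red _ _ (red_sq _ _ (1) (k * l * m * n) one_ne_zero (by ring) H7),
      pair_red _ _ (red_neg2 (n * l) (k * l * m * n) P3 P7),
      pair_red _ _ (red_sq _ _ (n * l) (m * k) P3.ne' (by ring) H6)]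
  · intro u hu
    simp only [List.mem_cons, List.not_mem_nil, or_false] at hu
    rcases hu with rfl | rfl | rfl | rfl
    exacts [pair_red _ _ (red_sq _ _ (m) (n * l) hmne (by ring) H3),
      pair_red _ _ (red_sq _ _ (m) (k * n) hmne (by ring) H2),
      pair_red _ _ (red_neg2 (m * n) (k * l * m * n) P4 P7),
      pair_red _ _ (red_sq _ _ (m * n) (k * l) P4.ne' (by ring) H1)]
  · intro u hu
    simp only [List.mem_cons, List.not_mem_nil, or_false] at hu
    rcases hu with rfl | rfl | rfl
    exacts [pair_red _ _ (red_sq _ _ (m) (k * l) hmne (by ring) H1),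
      pair_red _ _ (red_neg2 (m * l) (k * l * m * n) P5 P7),
      pair_red _ _ (red_sq _ _ (m * l) (k * n) P5.ne' (by ring) H2)]
  · intro u hu
    simp only [List.mem_cons, List.not_mem_nil, or_false] at hu
    rcases hu with rfl | rfl
    exacts [pair_red _ _ (red_neg2 (m * k) (k * l * m * n) P6 P7),
      pair_red _ _ (red_sq _ _ (m * k) (n * l) P6.ne' (by ring) H3)]
  · intro u hu
    simp only [List.mem_cons, List.not_mem_nil, or_false] at hu
    rcases hu with rfl
    exacts [pair_red _ _ (red_neg1 (k * l * m * n) (k * l * m * n) P7 P7)]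
  · intro u hu
    simp only [List.not_mem_nil] at hu
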